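/- For every deterministic DSIC and IR mechanism in the two-bidder two-item online setting achieving a finite approximation factor, fix w ∈ ℝ₊² with w₁ > 0 and suppose π₂(w) > π₁(w). Then for every v in the region B_R^V(w) = {v ∈ ℝ₊² : v₁ > π₁(w) and v₂ − π₂(w) < v₁ − π₁(w)}, in the scenario where both items arrive, bidder V is allocated item 1, is not allocated item 2, and pays π₁(w). -/

import Mathlib

open scoped ENNReal

noncomputable section

/-- Nonnegative orthant of ℝ² (valid type space of a bidder). -/
def Nn (p : ℝ × ℝ) : Prop := 0 ≤ p.1 ∧ 0 ≤ p.2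

/-- A deterministic mechanism for two unit-demand bidders `V`, `W` and two items.
`xV1 v w` is the (scenario-independent) allocation of item 1 to `V`, `xV2 v w`
the allocation of item 2 to `V` in the scenario where both items arrive;
`pV1` is `V`'s payment in the only-item-1 scenario and `pV2` in the both-items
scenario; similarly for `W`. -/
structure Mechanism where
  xV1 : ℝ × ℝ → ℝ × ℝ → Bool
  xV2 : ℝ × ℝ → ℝ × ℝ → Bool
  xW1 : ℝ × ℝ → ℝ × ℝ → Bool
  xW2 : ℝ × ℝ → ℝ × ℝ → Bool
  pV1 : ℝ × ℝ → ℝ × ℝ → ℝ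
  pV2 : ℝ × ℝ → ℝ × ℝ → ℝ
  pW1 : ℝ × ℝ → ℝ × ℝ → ℝ
  pW2 : ℝ × ℝ → ℝ × ℝ → ℝ
  feas1 : ∀ v w, ¬(xV1 v w = true ∧ xW1 v w = true)
  feas2 : ∀ v w, ¬(xV2 v w = true ∧ xW2 v w = true)

/-- Unit-demand value of a bidder with type `t` for the set of items indicated by `a1, a2`. -/
def setVal (t : ℝ × ℝ) (a1 a2 : Bool) : ℝ :=
  if a1 then (if a2 then max t.1 t.2 else t.1) else (if a2 then t.2 else 0)

/-- Utility of `V` with true type `t`, report `r`, opponent report `w`, when only item 1 arrives. -/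
def uV1 (m : Mechanism) (t r w : ℝ × ℝ) : ℝ := (if m.xV1 r w then t.1 else 0) - m.pV1 r w

/-- Utility of `V` with true type `t`, report `r`, opponent report `w`, when both items arrive. -/
def uV2 (m : Mechanism) (t r w : ℝ × ℝ) : ℝ := setVal t (m.xV1 r w) (m.xV2 r w) - m.pV2 r w

def uW1 (m : Mechanism) (v t r : ℝ × ℝ) : ℝ := (if m.xW1 v r then t.1 else 0) - m.pW1 v r

def uW2 (m : Mechanism) (v t r : ℝ × ℝ) : ℝ := setVal t (m.xW1 v r) (m.xW2 v r) - m.pW2 v r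

/-- Dominant-strategy incentive compatibility in every arrival scenario. -/
def DSIC (m : Mechanism) : Prop :=
  (∀ t r w, Nn t → Nn r → Nn w → uV1 m t r w ≤ uV1 m t t w) ∧
  (∀ t r w, Nn t → Nn r → Nn w → uV2 m t r w ≤ uV2 m t t w) ∧
  (∀ v t r, Nn v → Nn t → Nn r → uW1 m v t r ≤ uW1 m v t t) ∧
  (∀ v t r, Nn v → Nn t → Nn r → uW2 m v t r ≤ uW2 m v t t)

/-- Individual rationality: truthful reporting gives nonnegative utility in every scenario. -/
def IR (m : Mechanism) : Prop :=
  ∀ v w, Nn v → Nn w →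
    0 ≤ uV1 m v v w ∧ 0 ≤ uV2 m v v w ∧ 0 ≤ uW1 m v w w ∧ 0 ≤ uW2 m v w w

/-- Welfare of the mechanism's allocation when only item 1 arrives. -/
def welfare1 (m : Mechanism) (v w : ℝ × ℝ) : ℝ :=
  (if m.xV1 v w then v.1 else 0) + (if m.xW1 v w then w.1 else 0)

/-- Welfare of the mechanism's allocation when both items arrive. -/
def welfare2 (m : Mechanism) (v w : ℝ × ℝ) : ℝ :=
  setVal v (m.xV1 v w) (m.xV2 v w) + setVal w (m.xW1 v w) (m.xW2 v w)

/-- Optimal welfare when only item 1 arrives. -/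
def opt1 (v w : ℝ × ℝ) : ℝ := max v.1 w.1

/-- Optimal (max-weight matching) welfare when both items arrive. -/
def opt2 (v w : ℝ × ℝ) : ℝ := max (v.1 + w.2) (v.2 + w.1)

/-- The mechanism achieves approximation factor `H` to the optimal social welfare,
in every arrival scenario and for all reports. -/
def ApproxH (m : Mechanism) (H : ℝ) : Prop :=
  ∀ v w, Nn v → Nn w → opt1 v w ≤ H * welfare1 m v w ∧ opt2 v w ≤ H * welfare2 m v w

/-- Real-valued item-1 threshold function for bidder `V`. -/
def Thresh1 (m : Mechanism) (π₁ : ℝ × ℝ → ℝ) : Prop :=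
  ∀ w v, Nn w → Nn v →
    (π₁ w < v.1 → m.xV1 v w = true) ∧ (v.1 < π₁ w → m.xV1 v w = false)

/-- Real-valued item-2 threshold function (with threshold payment) for bidder `V`,
conditional on losing item 1. -/
def Thresh2 (m : Mechanism) (π₁ π₂ : ℝ × ℝ → ℝ) : Prop :=
  ∀ w v, Nn w → 0 < w.1 → Nn v → v.1 < π₁ w →
    (π₂ w < v.2 → m.xV2 v w = true ∧ m.pV2 v w = π₂ w) ∧
    (v.2 < π₂ w → m.xV2 v w = false ∧ m.pV2 v w = 0)

/-- When `V` wins only item 1 (in the both-items scenario) he pays `π₁ w`. -/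
def PayOne (m : Mechanism) (π₁ : ℝ × ℝ → ℝ) : Prop :=
  ∀ w v, Nn w → Nn v → m.xV1 v w = true → m.xV2 v w = false → m.pV2 v w = π₁ w

/-- Every `v` in the region `T_R^V(w)` wins both items and pays `π₂ w`. -/
def TRBoth (m : Mechanism) (π₁ π₂ : ℝ × ℝ → ℝ) : Prop :=
  ∀ w v, Nn w → 0 < w.1 → Nn v → π₁ w < v.1 → v.1 - π₁ w < v.2 - π₂ w →
    m.xV1 v w = true ∧ m.xV2 v w = true ∧ m.pV2 v w = π₂ w

/-- for a DSIC + IR mechanism with finite approximation factor,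
if `w₁ > 0` and `π₂(w) > π₁(w)`, then every
`v ∈ B_R^V(w) = {v : v₁ > π₁(w), v₂ − π₂(w) < v₁ − π₁(w)}` gets item 1,
does not get item 2, and pays `π₁(w)` in the both-items scenario. -/
theorem BR_gets_only_item1 (m : Mechanism) (hD : DSIC m) (hIR : IR m)
    (H : ℝ) (hH : 1 ≤ H) (hA : ApproxH m H)
    (π₁ π₂ : ℝ × ℝ → ℝ)
    (h1 : Thresh1 m π₁) (h2 : Thresh2 m π₁ π₂)
    (hpay : PayOne m π₁) (hTR : TRBoth m π₁ π₂) :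
    ∀ w, Nn w → 0 < w.1 → π₁ w < π₂ w →
      ∀ v, Nn v → π₁ w < v.1 → v.2 - π₂ w < v.1 - π₁ w →
        m.xV1 v w = true ∧ m.xV2 v w = false ∧ m.pV2 v w = π₁ w := by
  intro w hw hw1 hππ v hv hv1 hvB
  -- π₁ w ≥ 0
  have hπ1nn : 0 ≤ π₁ w := by
    by_contra h
    push_neg at h
    have h0 : Nn ((0 : ℝ), (1 : ℝ)) := ⟨le_refl 0, zero_le_one⟩
    have hx : m.xV1 (0, 1) w = true := (h1 w (0, 1) hw h0).1 (by simpa using h)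
    have hxw : m.xW1 (0, 1) w = false := by
      by_contra hh
      rw [Bool.not_eq_false] at hh
      exact m.feas1 (0, 1) w ⟨hx, hh⟩
    have hA1 := (hA (0, 1) w h0 hw).1
    simp [opt1, welfare1, hx, hxw] at hA1
    linarith
  set a := (π₁ w + π₂ w) / 2 with ha
  have haπ1 : π₁ w < a := by rw [ha]; linarith
  have haπ2 : a < π₂ w := by rw [ha]; linarith
  have ha0 : 0 < a := lt_of_le_of_lt hπ1nn haπ1
  -- a TR point
  set t : ℝ × ℝ := (a, π₂ w + a + 1) with ht
  have hNt : Nn t := ⟨le_of_lt ha0, by simp [ht]; linarith⟩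
  obtain ⟨ht1, ht2, htp⟩ :=
    hTR w t hw hw1 hNt (by simpa [ht] using haπ1) (by simp [ht]; linarith)
  -- any bidder winning both items pays π₂ w
  have hpay2 : ∀ v', Nn v' → m.xV1 v' w = true → m.xV2 v' w = true →
      m.pV2 v' w = π₂ w := by
    intro v' hNv' hx1 hx2
    have hle1 := hD.2.1 t v' w hNt hNv' hw
    have hle2 := hD.2.1 v' t w hNv' hNt hw
    simp [uV2, setVal, hx1, hx2, ht1, ht2, htp] at hle1 hle2
    have hmaxt : a ⊔ (π₂ w + a + 1) = π₂ w + a + 1 := max_eq_right (by linarith)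
    rw [hmaxt] at hle1
    rcases max_cases v'.1 v'.2 with ⟨he, _⟩ | ⟨he, _⟩ <;> rw [he] at hle2 <;>
      linarith [hle1.2, hle2.1, hle2.2]
  -- r = (a, 0) wins only item 1
  set r : ℝ × ℝ := (a, 0) with hr
  have hNr : Nn r := ⟨le_of_lt ha0, le_refl 0⟩
  have hrx1 : m.xV1 r w = true := (h1 w r hw hNr).1 (by simpa [hr] using haπ1)
  have hrx2 : m.xV2 r w = false := by
    by_contra hh
    rw [Bool.not_eq_false] at hh
    have hp := hpay2 r hNr hrx1 hh
    have hIRr := (hIR r w hNr hw).2.1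
    simp [uV2, setVal, hrx1, hh, hp] at hIRr
    simp [hr] at hIRr
    rcases hIRr with h' | h' <;> linarith
  have hrp : m.pV2 r w = π₁ w := hpay w r hw hNr hrx1 hrx2
  -- conclude for v
  have hvx1 : m.xV1 v w = true := (h1 w v hw hv).1 hv1
  have hvx2 : m.xV2 v w = false := by
    by_contra hh
    rw [Bool.not_eq_false] at hh
    have hp := hpay2 v hv hvx1 hh
    have hdsic := hD.2.1 v r w hv hNr hw
    simp [uV2, setVal, hvx1, hh, hp, hrx1, hrx2, hrp] at hdsic
    rcases max_cases v.1 v.2 with ⟨he, _⟩ | ⟨he, _⟩ <;> rw [he] at hdsic <;> linarith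
  exact ⟨hvx1, hvx2, hpay w v hw hv hvx1 hvx2⟩
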